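/- The function Γ(τ, X) = κ X² coth(τκ) satisfies the risk-neutral reduced HJB equation ∂Γ/∂τ = κ² X² − (1/4)(∂Γ/∂X)² for all τ > 0 and X ∈ ℝ. -/

import Mathlib

/-- `Γ(τ, X) = κ X² coth(τκ)` satisfies the risk-neutral reduced HJB equation
`∂Γ/∂τ = κ² X² − (1/4)(∂Γ/∂X)²` for all `τ > 0` and `X ∈ ℝ`. -/
theorem riskNeutral_closedForm_solves_HJB (κ : ℝ) (hκ : 0 < κ) (τ X : ℝ) (hτ : 0 < τ) :
    deriv (fun s : ℝ => κ * X ^ 2 * (Real.cosh (s * κ) / Real.sinh (s * κ))) τ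
      = κ ^ 2 * X ^ 2
        - (1 / 4) * (deriv (fun x : ℝ => κ * x ^ 2 * (Real.cosh (τ * κ) / Real.sinh (τ * κ))) X) ^ 2 := by
  have hs : Real.sinh (τ * κ) ≠ 0 := ne_of_gt (Real.sinh_pos_iff.mpr (mul_pos hτ hκ))
  have hc : HasDerivAt (fun s : ℝ => Real.cosh (s * κ)) (Real.sinh (τ * κ) * κ) τ :=
    by have := (Real.hasDerivAt_cosh (τ * κ)).comp τ (hasDerivAt_mul_const κ); exact this
  have hsh : HasDerivAt (fun s : ℝ => Real.sinh (s * κ)) (Real.cosh (τ * κ) * κ) τ :=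
    by have := (Real.hasDerivAt_sinh (τ * κ)).comp τ (hasDerivAt_mul_const κ); exact this
  have h1 : HasDerivAt (fun s : ℝ => κ * X ^ 2 * (Real.cosh (s * κ) / Real.sinh (s * κ)))
      (κ * X ^ 2 * ((Real.sinh (τ * κ) * κ * Real.sinh (τ * κ)
        - Real.cosh (τ * κ) * (Real.cosh (τ * κ) * κ)) / Real.sinh (τ * κ) ^ 2)) τ :=
    ((hc.div hsh hs).const_mul _)
  have hx : HasDerivAt (fun x : ℝ => x ^ 2) (2 * X) X := by
    simpa using hasDerivAt_pow 2 X
  have h2 : HasDerivAt (fun x : ℝ => κ * x ^ 2 * (Real.cosh (τ * κ) / Real.sinh (τ * κ)))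
      (κ * (2 * X) * (Real.cosh (τ * κ) / Real.sinh (τ * κ))) X :=
    (hx.const_mul κ).mul_const _
  rw [h1.deriv, h2.deriv]
  have hc2 : Real.cosh (τ * κ) ^ 2 = Real.sinh (τ * κ) ^ 2 + 1 := Real.cosh_sq (τ * κ)
  field_simp
  nlinarith [sq_nonneg (Real.sinh (τ * κ)), sq_nonneg κ, sq_nonneg X]
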